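/- Let h : ℂ⁺ → ℂ⁺ be analytic and suppose h extends analytically to a real neighborhood of x ∈ ℝ with h real-valued there. Then h'(x) > 0 unless h is constant. -/

import Mathlib

open Complex Metric Filter Topology

/-- If `h : ℂ⁺ → ℂ⁺` is analytic, extends analytically to a real neighborhood of `x ∈ ℝ` where
it is real-valued, and is nonconstant, then `h'(x) > 0` (in particular `h'(x)` is real). -/
theorem nonconstant_pick_function_deriv_pos (x ε : ℝ) (hε : 0 < ε) (h : ℂ → ℂ)
    (hdiff : DifferentiableOn ℂ h ({z : ℂ | 0 < z.im} ∪ Metric.ball (x : ℂ) ε))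
    (hmap : ∀ z : ℂ, 0 < z.im → 0 < (h z).im)
    (hreal : ∀ y : ℝ, (y : ℂ) ∈ Metric.ball (x : ℂ) ε → (h (y : ℂ)).im = 0)
    (hnc : ¬ ∀ z ∈ ({z : ℂ | 0 < z.im} ∪ Metric.ball (x : ℂ) ε), h z = h (x : ℂ)) :
    0 < (deriv h (x : ℂ)).re ∧ (deriv h (x : ℂ)).im = 0 := by
  set U : Set ℂ := {z : ℂ | 0 < z.im} ∪ Metric.ball (x : ℂ) ε with hUdef
  have hUopen : IsOpen U :=
    (isOpen_lt continuous_const Complex.continuous_im).union Metric.isOpen_ball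
  have hxball : (x : ℂ) ∈ Metric.ball (x : ℂ) ε := Metric.mem_ball_self hε
  have hxU : (x : ℂ) ∈ U := Or.inr hxball
  have han : AnalyticOnNhd ℂ h U := hdiff.analyticOnNhd hUopen
  have hUconn : IsPreconnected U := by
    apply IsPreconnected.union ((x : ℂ) + (ε / 2) * Complex.I)
    · show 0 < ((x : ℂ) + (ε / 2) * Complex.I).im
      simp [Complex.add_im, Complex.ofReal_im, Complex.mul_im]
      positivity
    · rw [Metric.mem_ball]
      have : dist ((x : ℂ) + (ε / 2) * Complex.I) (x : ℂ) = ε / 2 := by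
        rw [dist_eq_norm]
        have h1 : ((x : ℂ) + (ε / 2) * Complex.I) - (x:ℂ) = ((ε/2 : ℝ) : ℂ) * Complex.I := by
          push_cast; ring
        rw [h1]
        simp
        exact hε.le
      rw [this]; linarith
    · exact (convex_halfSpace_im_gt (0 : ℝ)).isPreconnected
    · exact (convex_ball _ _).isPreconnected
  have hhx : (h (x : ℂ)).im = 0 := hreal x hxball
  set f : ℂ → ℂ := fun z => h z - h (x : ℂ) with hfdef
  have hfan : AnalyticAt ℂ f (x : ℂ) := ((han _ hxU).sub analyticAt_const)
  -- f is not eventually zero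
  have hne : ¬ (∀ᶠ z in 𝓝 (x : ℂ), f z = 0) := by
    intro hev
    apply hnc
    intro z hz
    have := AnalyticOnNhd.eqOn_zero_of_preconnected_of_eventuallyEq_zero
      (f := f) (fun w hw => ((han w hw).sub analyticAt_const)) hUconn hxU
      (hev.mono fun w hw => hw) hz
    simpa [hfdef, sub_eq_zero] using this
  have hord_ne_top : analyticOrderAt f (x : ℂ) ≠ ⊤ := fun ht => hne (analyticOrderAt_eq_top.mp ht)
  obtain ⟨n, hn⟩ : ∃ n : ℕ, analyticOrderAt f (x : ℂ) = n := by
    cases hno : analyticOrderAt f (x : ℂ) with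
    | top => exact absurd hno hord_ne_top
    | coe n => exact ⟨n, rfl⟩
  obtain ⟨g, hg_an, hg_ne, hg_eq⟩ := (hfan.analyticOrderAt_eq_natCast (n := n)).mp hn
  have hg_eq' : ∀ᶠ z in 𝓝 (x : ℂ), f z = (z - (x : ℂ)) ^ n * g z := by
    simpa [smul_eq_mul] using hg_eq
  have hn_pos : 0 < n := by
    rcases Nat.eq_zero_or_pos n with h0 | h0
    · exfalso
      have hx0 : f (x : ℂ) = 0 := by simp [hfdef]
      have hself := hg_eq'.self_of_nhds
      rw [hx0, h0, pow_zero, one_mul] at hself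
      exact hg_ne hself.symm
    · exact h0
  -- g x is real
  have hg_im : (g (x : ℂ)).im = 0 := by
    have htend : Tendsto (fun y : ℝ => (g ((y : ℝ) : ℂ)).im) (𝓝[≠] x) (𝓝 ((g (x:ℂ)).im)) := by
      have h1 : Tendsto (fun y : ℝ => ((y : ℝ) : ℂ)) (𝓝[≠] x) (𝓝 (x : ℂ)) :=
        (Complex.continuous_ofReal.continuousAt.tendsto).mono_left nhdsWithin_le_nhds
      exact (Complex.continuous_im.continuousAt.tendsto.comp
        (hg_an.continuousAt.tendsto.comp h1))
    have hzero : ∀ᶠ y : ℝ in 𝓝[≠] x, (g ((y : ℝ) : ℂ)).im = 0 := by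
      have hball : ∀ᶠ y : ℝ in 𝓝[≠] x, ((y : ℝ) : ℂ) ∈ Metric.ball (x : ℂ) ε := by
        have : ∀ᶠ y : ℝ in 𝓝 x, ((y : ℝ) : ℂ) ∈ Metric.ball (x : ℂ) ε := by
          have : ContinuousAt (fun y : ℝ => ((y : ℝ) : ℂ)) x := Complex.continuous_ofReal.continuousAt
          exact this (Metric.isOpen_ball.mem_nhds hxball)
        exact nhdsWithin_le_nhds this
      have heq : ∀ᶠ y : ℝ in 𝓝[≠] x, f ((y:ℝ):ℂ) = (((y:ℝ):ℂ) - (x:ℂ)) ^ n * g ((y:ℝ):ℂ) := by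
        have h1 : Tendsto (fun y : ℝ => ((y : ℝ) : ℂ)) (𝓝[≠] x) (𝓝 (x : ℂ)) :=
          (Complex.continuous_ofReal.continuousAt.tendsto).mono_left nhdsWithin_le_nhds
        exact h1.eventually hg_eq'
      filter_upwards [hball, heq, self_mem_nhdsWithin] with y hyb hye hymem
      have hyne : y ≠ x := hymem
      have hfy : f ((y:ℝ):ℂ) = ((((h ((y:ℝ):ℂ)).re - (h (x:ℂ)).re : ℝ)) : ℂ) := by
        apply Complex.ext <;> simp [hfdef, hreal y hyb, hhx]
      have hpow : (((y:ℝ):ℂ) - (x:ℂ)) ^ n = (((y - x) ^ n : ℝ) : ℂ) := by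
        push_cast; ring
      have hpne : ((y - x) ^ n : ℝ) ≠ 0 := pow_ne_zero _ (sub_ne_zero.mpr hyne)
      have hsC : ((((y - x) ^ n : ℝ)) : ℂ) ≠ 0 := by exact_mod_cast hpne
      have heqy := hye
      rw [hfy, hpow] at heqy
      have : g ((y:ℝ):ℂ) = ((((h ((y:ℝ):ℂ)).re - (h (x:ℂ)).re : ℝ)) : ℂ) / ((((y - x) ^ n : ℝ)) : ℂ) := by
        rw [eq_div_iff hsC, mul_comm]
        exact heqy.symm
      rw [this]
      simp only [← Complex.ofReal_div, Complex.ofReal_im]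
    have : Tendsto (fun y : ℝ => (g ((y : ℝ) : ℂ)).im) (𝓝[≠] x) (𝓝 0) :=
      Tendsto.congr' (hzero.mono fun y hy => hy.symm) tendsto_const_nhds
    exact tendsto_nhds_unique htend this
  set a : ℝ := (g (x : ℂ)).re with hadef
  have hgx : g (x : ℂ) = (a : ℂ) := by
    apply Complex.ext <;> simp [hadef, hg_im]
  have ha_ne : a ≠ 0 := by
    intro h0
    apply hg_ne
    rw [hgx, h0]
    simp
  -- key sub-lemma
  have key : ∀ θ : ℝ, 0 < θ → θ < Real.pi → 0 ≤ a * Real.sin (n * θ) := by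
    intro θ hθ0 hθπ
    set c : ℂ := Complex.exp (θ * Complex.I) with hcdef
    have hsinθ : 0 < Real.sin θ := Real.sin_pos_of_pos_of_lt_pi hθ0 hθπ
    have hcim : c.im = Real.sin θ := by
      rw [hcdef, Complex.exp_ofReal_mul_I_im]
    have habs : ‖c‖ = 1 := by
      rw [hcdef]; exact Complex.norm_exp_ofReal_mul_I θ
    set z : ℝ → ℂ := fun t => (x : ℂ) + t * c with hzdef
    have hztend : Tendsto z (𝓝[>] (0:ℝ)) (𝓝 (x : ℂ)) := by
      have : Tendsto z (𝓝 (0:ℝ)) (𝓝 (x : ℂ)) := by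
        have hc : Continuous z := by
          exact continuous_const.add (Complex.continuous_ofReal.mul continuous_const)
        have := hc.continuousAt (x := (0:ℝ))
        simpa [hzdef] using this.tendsto
      exact this.mono_left nhdsWithin_le_nhds
    -- limit of w t := c^n * g (z t)
    have hwtend : Tendsto (fun t : ℝ => ((c ^ n) * g (z t)).im) (𝓝[>] (0:ℝ))
        (𝓝 (a * Real.sin (n * θ))) := by
      have h1 : Tendsto (fun t : ℝ => (c ^ n) * g (z t)) (𝓝[>] (0:ℝ)) (𝓝 ((c ^ n) * g (x:ℂ))) :=
        tendsto_const_nhds.mul (hg_an.continuousAt.tendsto.comp hztend)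
      have h2 := Complex.continuous_im.continuousAt.tendsto.comp h1
      have : ((c ^ n) * g (x:ℂ)).im = a * Real.sin (n * θ) := by
        have harg : ((n : ℂ) * ((θ : ℂ) * Complex.I)) = ((n * θ : ℝ) : ℂ) * Complex.I := by
          push_cast; ring
        rw [hgx, hcdef, ← Complex.exp_nat_mul, harg, Complex.mul_im,
          Complex.exp_ofReal_mul_I_re, Complex.exp_ofReal_mul_I_im,
          Complex.ofReal_im, Complex.ofReal_re]
        ring
      rw [← this]
      exact h2
    -- eventually the imaginary part is positive
    have hev : ∀ᶠ t : ℝ in 𝓝[>] (0:ℝ), 0 < ((c ^ n) * g (z t)).im := by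
      have hIoo : Set.Ioo (0:ℝ) ε ∈ 𝓝[>] (0:ℝ) := Ioo_mem_nhdsGT_of_mem ⟨le_refl _, hε⟩
      have heq : ∀ᶠ t : ℝ in 𝓝[>] (0:ℝ), f (z t) = (z t - (x:ℂ)) ^ n * g (z t) :=
        hztend.eventually hg_eq'
      filter_upwards [hIoo, heq] with t ht hte
      obtain ⟨ht0, htε⟩ := ht
      have hzim : 0 < (z t).im := by
        have : (z t).im = t * Real.sin θ := by
          simp [hzdef, Complex.add_im, Complex.ofReal_im, Complex.im_ofReal_mul, hcim]
        rw [this]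
        positivity
      have hhz : 0 < (h (z t)).im := hmap _ hzim
      have hfz : 0 < (f (z t)).im := by simp [hfdef, hhx]; exact hhz
      have hzx : z t - (x:ℂ) = (t : ℂ) * c := by simp only [hzdef]; ring
      have : (f (z t)).im = t ^ n * ((c ^ n) * g (z t)).im := by
        rw [hte, hzx, mul_pow]
        have : ((t:ℂ))^n = ((t^n : ℝ) : ℂ) := by push_cast; ring
        rw [this, mul_assoc, Complex.im_ofReal_mul]
      rw [this] at hfz
      have htn : 0 < t ^ n := pow_pos ht0 n
      nlinarith
    exact ge_of_tendsto hwtend (hev.mono fun t ht => le_of_lt ht)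
  have hnR : (0:ℝ) < n := by exact_mod_cast hn_pos
  have ha_pos : 0 < a := by
    have hθ0 : 0 < Real.pi / (2 * n) := by positivity
    have hn1R : (1:ℝ) ≤ n := by exact_mod_cast hn_pos
    have hθπ : Real.pi / (2 * n) < Real.pi := by
      rw [div_lt_iff₀ (by positivity)]
      nlinarith [Real.pi_pos]
    have := key _ hθ0 hθπ
    have harg : (n : ℝ) * (Real.pi / (2 * n)) = Real.pi / 2 := by
      field_simp
    rw [harg, Real.sin_pi_div_two, mul_one] at this
    exact lt_of_le_of_ne this (Ne.symm ha_ne)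
  have hn1 : n = 1 := by
    by_contra hne1
    have hn2 : 2 ≤ n := by omega
    have hn2R : (2:ℝ) ≤ n := by exact_mod_cast hn2
    have hθ0 : 0 < 3 * Real.pi / (2 * n) := by positivity
    have hθπ : 3 * Real.pi / (2 * n) < Real.pi := by
      rw [div_lt_iff₀ (by positivity)]
      nlinarith [Real.pi_pos]
    have := key _ hθ0 hθπ
    have harg : (n : ℝ) * (3 * Real.pi / (2 * n)) = 3 * Real.pi / 2 := by
      field_simp
    have hsin : Real.sin (3 * Real.pi / 2) = -1 := by
      have : (3 : ℝ) * Real.pi / 2 = Real.pi + Real.pi / 2 := by ring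
      rw [this]
      simp [Real.sin_add]
    rw [harg, hsin] at this
    nlinarith
  have hderiv : deriv h (x : ℂ) = g (x : ℂ) := by
    have hd1 : deriv f (x:ℂ) = deriv h (x:ℂ) := by
      simp [hfdef, deriv_sub_const]
    have hfg : f =ᶠ[𝓝 (x:ℂ)] fun z => (z - (x:ℂ)) * g z := by
      filter_upwards [hg_eq'] with w hw
      rw [hw, hn1, pow_one]
    have h1 : HasDerivAt (fun z : ℂ => z - (x:ℂ)) 1 (x:ℂ) := (hasDerivAt_id _).sub_const _
    have h2 : HasDerivAt g (deriv g (x:ℂ)) (x:ℂ) := hg_an.differentiableAt.hasDerivAt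
    have h3 := h1.mul h2
    have h4 : deriv (fun z : ℂ => (z - (x:ℂ)) * g z) (x:ℂ)
        = 1 * g (x:ℂ) + ((x:ℂ) - (x:ℂ)) * deriv g (x:ℂ) := h3.deriv
    rw [← hd1, hfg.deriv_eq, h4]
    ring
  rw [hderiv]
  exact ⟨ha_pos, hg_im⟩
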